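/- For every k ≥ 4, there is no (2k−4)-regular simple graph with chromatic number k on 2k−2 vertices; hence every (2k−4|k)-graph has at least 2k−1 vertices and the complement of C_{2k−1} is extremal. -/

import Mathlib

open SimpleGraph Finset

private lemma colorable_half {n : ℕ} (G : SimpleGraph (Fin n)) [DecidableRel G.Adj]
    (h : ∀ v, Gᶜ.degree v = 1) : G.Colorable (n / 2) := by
  classical
  have hex : ∀ v, ∃ u, Gᶜ.neighborFinset v = {u} := fun v =>
    Finset.card_eq_one.mp (h v)
  choose f hf using hex
  have hadj : ∀ v, Gᶜ.Adj v (f v) := fun v => by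
    rw [← mem_neighborFinset, hf v]; exact Finset.mem_singleton_self _
  have hne : ∀ v, f v ≠ v := fun v => (hadj v).ne'
  have hinv : ∀ v, f (f v) = v := fun v => by
    have : v ∈ Gᶜ.neighborFinset (f v) := by
      rw [mem_neighborFinset]; exact (hadj v).symm
    rw [hf (f v), Finset.mem_singleton] at this
    exact this.symm
  have hfinj : Function.Injective f := Function.Involutive.injective hinv
  set S : Finset (Fin n) := Finset.univ.filter (fun v => v < f v) with hS
  have hST : S.image f = Finset.univ.filter (fun v => f v < v) := by
    ext u
    simp only [Finset.mem_image, hS, Finset.mem_filter, Finset.mem_univ, true_and]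
    constructor
    · rintro ⟨v, hv, rfl⟩; rw [hinv]; exact hv
    · intro hu; exact ⟨f u, by rw [hinv]; exact hu, hinv u⟩
  have hcards : S.card + S.card = n := by
    have h1 : (S.image f).card = S.card := Finset.card_image_of_injective _ hfinj
    have h2 : S.card + (Finset.univ.filter (fun v => ¬ v < f v)).card = n := by
      rw [hS, Finset.card_filter_add_card_filter_not]
      simp
    have h3 : (Finset.univ.filter (fun v => ¬ v < f v) : Finset (Fin n)) =
        Finset.univ.filter (fun v => f v < v) := by
      apply Finset.filter_congr
      intro x _
      simp only [not_lt, eq_iff_iff]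
      constructor
      · intro hle; exact lt_of_le_of_ne hle (hne x)
      · exact le_of_lt
    rw [h3, ← hST, h1] at h2
    exact h2
  have hcardS : S.card = n / 2 := by omega
  have hmemS : ∀ v : Fin n, min v (f v) ∈ S := by
    intro v
    rcases le_total v (f v) with hle | hle
    · rw [min_eq_left hle, hS, Finset.mem_filter]
      exact ⟨Finset.mem_univ _, lt_of_le_of_ne hle (Ne.symm (hne v))⟩
    · rw [min_eq_right hle, hS, Finset.mem_filter]
      refine ⟨Finset.mem_univ _, ?_⟩
      rw [hinv]
      exact lt_of_le_of_ne hle (hne v)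
  have hnadj : ∀ u v, G.Adj u v → v ≠ f u := by
    intro u v huv hvf
    subst hvf
    exact ((compl_adj G u (f u)).mp (hadj u)).2 huv
  let C : G.Coloring {x // x ∈ S} := Coloring.mk (fun v => ⟨min v (f v), hmemS v⟩) (by
    intro u v huv heq
    have heq' : min u (f u) = min v (f v) := congrArg Subtype.val heq
    rcases min_cases u (f u) with ⟨h1, _⟩ | ⟨h1, _⟩ <;>
      rcases min_cases v (f v) with ⟨h2, _⟩ | ⟨h2, _⟩ <;>
      rw [h1, h2] at heq'
    · exact huv.ne heq'
    · exact hnadj u v huv (by rw [heq', hinv])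
    · exact hnadj v u huv.symm (by rw [← heq', hinv])
    · exact huv.ne (hfinj heq'))
  have := C.colorable
  rwa [Fintype.card_coe, hcardS] at this

private lemma ncard_neighborSet_eq_degree {n : ℕ} (G : SimpleGraph (Fin n))
    [DecidableRel G.Adj] (v : Fin n) : (G.neighborSet v).ncard = G.degree v := by
  rw [Set.ncard_eq_toFinset_card']
  congr 1

private lemma no_graph_on_2k2 {k : ℕ} (hk : 4 ≤ k) (G : SimpleGraph (Fin (2*k-2)))
    (hreg : ∀ v, (G.neighborSet v).ncard = 2*k-4)
    (hχ : G.chromaticNumber = (k : ℕ∞)) : False := by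
  classical
  have hdeg : ∀ v, G.degree v = 2*k-4 := fun v => by
    rw [← ncard_neighborSet_eq_degree]; exact hreg v
  have hcompl : ∀ v, Gᶜ.degree v = 1 := fun v => by
    rw [degree_compl, hdeg v, Fintype.card_fin]; omega
  have hle := (colorable_half G hcompl).chromaticNumber_le
  rw [hχ] at hle
  have : k ≤ (2*k-2)/2 := Nat.cast_le.mp hle
  omega

section cycle
variable {m : ℕ}

private lemma fin_val_one' : ((1 : Fin (m+3))).val = 1 := by
  rw [Fin.val_one', Nat.mod_eq_of_lt (by omega)]

private lemma fin_add_one_ne (x : Fin (m+3)) : x + 1 ≠ x := by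
  intro hx
  have h0 : (1 : Fin (m+3)) = 0 := by
    have := hx
    nth_rewrite 2 [← add_zero x] at this
    exact add_left_cancel this
  have := congrArg Fin.val h0
  rw [fin_val_one', Fin.val_zero] at this
  exact one_ne_zero this

private lemma fin_add_three_ne (x : Fin (m+3)) (hm : 1 ≤ m) : x + 1 + 1 + 1 ≠ x := by
  intro hx
  rw [add_assoc, add_assoc] at hx
  nth_rewrite 2 [← add_zero x] at hx
  have h0 := add_left_cancel hx
  have hv2 : ((1 + 1 : Fin (m+3))).val = 2 := by
    rw [Fin.val_add, fin_val_one', Nat.mod_eq_of_lt (by omega)]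
  have hv3 : ((1 + (1 + 1) : Fin (m+3))).val = 3 := by
    rw [Fin.val_add, fin_val_one', hv2, Nat.mod_eq_of_lt (by omega)]
  have := congrArg Fin.val h0
  rw [hv3, Fin.val_zero] at this
  exact absurd this (by omega)

private lemma cycle_adj_iff {u v : Fin (m+3)} :
    (cycleGraph (m+3)).Adj u v → u = v + 1 ∨ v = u + 1 := by
  intro h
  rw [cycleGraph_adj'] at h
  rcases h with h | h
  · left
    have h2 : u - v = 1 := Fin.ext (by rw [h, fin_val_one'])
    rw [sub_eq_iff_eq_add] at h2
    exact h2.trans (add_comm 1 v)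
  · right
    have h2 : v - u = 1 := Fin.ext (by rw [h, fin_val_one'])
    rw [sub_eq_iff_eq_add] at h2
    exact h2.trans (add_comm 1 u)

private lemma cycle_triangle_free (hm : 1 ≤ m) {a b c : Fin (m+3)}
    (hab : (cycleGraph (m+3)).Adj a b) (hbc : (cycleGraph (m+3)).Adj b c)
    (hac : (cycleGraph (m+3)).Adj a c) : False := by
  rcases cycle_adj_iff hab with h1 | h1
  · subst h1
    rcases cycle_adj_iff hbc with h2 | h2
    · subst h2
      rcases cycle_adj_iff hac with h3 | h3
      · exact fin_add_one_ne (c+1) h3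
      · exact fin_add_three_ne c hm h3.symm
    · subst h2
      exact hac.ne rfl
  · subst h1
    rcases cycle_adj_iff hbc with h2 | h2
    · exact hac.ne (add_right_cancel h2)
    · subst h2
      rcases cycle_adj_iff hac with h3 | h3
      · exact fin_add_three_ne a hm h3.symm
      · exact fin_add_one_ne (a+1) h3

private lemma cycle_adj_of_succ {u v : Fin (m+3)} (h : v = u + 1) :
    (cycleGraph (m+3)).Adj u v := by
  rw [cycleGraph_adj']
  right
  rw [h, add_sub_cancel_left, fin_val_one']

private lemma compl_cycle_colorable {k : ℕ} (hmk : m + 3 = 2*k - 1) (hk : 4 ≤ k) :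
    ((cycleGraph (m+3))ᶜ).Colorable k := by
  have hsucc : ∀ u v : Fin (m+3), u.val + 1 = v.val → v = u + 1 := by
    intro u v huv
    have hv := v.is_lt
    apply Fin.ext
    rw [Fin.val_add, fin_val_one', Nat.mod_eq_of_lt (by omega)]
    omega
  exact ⟨Coloring.mk (fun v => ⟨v.val / 2, by have := v.is_lt; omega⟩) (by
    intro u v huv heq
    have heq' : u.val / 2 = v.val / 2 := congrArg Fin.val heq
    rw [compl_adj] at huv
    obtain ⟨hne, hnadj⟩ := huv
    have hvne : u.val ≠ v.val := fun h => hne (Fin.ext h)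
    rcases lt_or_gt_of_ne hvne with hlt | hlt
    · have h1 : u.val + 1 = v.val := by omega
      exact hnadj (cycle_adj_of_succ (hsucc u v h1))
    · have h1 : v.val + 1 = u.val := by omega
      exact hnadj ((cycle_adj_of_succ (hsucc v u h1)).symm))⟩

private lemma compl_cycle_card_le {c : ℕ} (hm : 1 ≤ m)
    (h : ((cycleGraph (m+3))ᶜ).Colorable c) : m + 3 ≤ 2 * c := by
  obtain ⟨C⟩ := h
  have hfib : ∀ a ∈ Finset.univ.image C, ((Finset.univ : Finset (Fin (m+3))).filter
      (fun x => C x = a)).card ≤ 2 := by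
    intro a _
    by_contra hgt
    push_neg at hgt
    obtain ⟨x, y, z, hx, hy, hz, hxy, hxz, hyz⟩ := Finset.two_lt_card_iff.mp hgt
    simp only [Finset.mem_filter, Finset.mem_univ, true_and] at hx hy hz
    have hadj : ∀ p q : Fin (m+3), p ≠ q → C p = C q → (cycleGraph (m+3)).Adj p q := by
      intro p q hpq hc
      by_contra hn
      exact C.valid ((compl_adj _ p q).mpr ⟨hpq, hn⟩) hc
    exact cycle_triangle_free hm (hadj x y hxy (hx.trans hy.symm))
      (hadj y z hyz (hy.trans hz.symm)) (hadj x z hxz (hx.trans hz.symm))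
  have hcard := Finset.card_le_mul_card_image (Finset.univ : Finset (Fin (m+3))) 2 hfib
  have himg : (Finset.univ.image C).card ≤ c := by
    have := Finset.card_le_card (Finset.subset_univ (Finset.univ.image C))
    simpa using this
  simp only [Finset.card_univ, Fintype.card_fin] at hcard
  omega

private lemma compl_cycle_chrom {k : ℕ} (hmk : m + 3 = 2*k - 1) (hk : 4 ≤ k) :
    ((cycleGraph (m+3))ᶜ).chromaticNumber = k := by
  have hcol := compl_cycle_colorable hmk hk
  have hfin := ((cycleGraph (m+3))ᶜ).colorable_chromaticNumber_of_fintype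
  set c := ENat.toNat ((cycleGraph (m+3))ᶜ).chromaticNumber with hc
  have hne : ((cycleGraph (m+3))ᶜ).chromaticNumber ≠ ⊤ :=
    (hcol.chromaticNumber_le.trans_lt (WithTop.coe_lt_top k)).ne
  have hcoe : ((cycleGraph (m+3))ᶜ).chromaticNumber = (c : ℕ∞) := (ENat.coe_toNat hne).symm
  have hge := compl_cycle_card_le (by omega) hfin
  refine le_antisymm hcol.chromaticNumber_le ?_
  rw [hcoe]
  exact Nat.cast_le.mpr (by omega)

end cycle

private lemma min_order {k : ℕ} (hk : 4 ≤ k) (n : ℕ) (G : SimpleGraph (Fin n))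
    (hreg : ∀ v, (G.neighborSet v).ncard = 2*k-4)
    (hχ : G.chromaticNumber = (k : ℕ∞)) : 2*k-1 ≤ n := by
  classical
  by_contra hlt
  push_neg at hlt
  rcases Nat.eq_zero_or_pos n with hn0 | hnpos
  · subst hn0
    rw [G.chromaticNumber_eq_zero_of_isEmpty] at hχ
    have : k = 0 := Nat.cast_injective hχ.symm
    omega
  · have hdeg : ∀ v, G.degree v = 2*k-4 := fun v => by
      rw [← ncard_neighborSet_eq_degree]; exact hreg v
    have hv : Fin n := ⟨0, hnpos⟩
    have hlt2 := G.degree_lt_card_verts hv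
    rw [hdeg hv, Fintype.card_fin] at hlt2
    have hcase : n = 2*k-3 ∨ n = 2*k-2 := by omega
    rcases hcase with hn | hn
    · have hcompl : ∀ u, Gᶜ.degree u = 0 := fun u => by
        rw [degree_compl, hdeg u, Fintype.card_fin]; omega
      have hbot : Gᶜ = ⊥ := by
        ext u w
        simp only [bot_adj, iff_false]
        intro hadj
        have hmem : w ∈ Gᶜ.neighborFinset u := by rwa [mem_neighborFinset]
        rw [Finset.card_eq_zero.mp (hcompl u)] at hmem
        exact absurd hmem (Finset.notMem_empty w)
      have htop : G = ⊤ := by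
        rw [← compl_compl G, hbot, compl_bot]
      rw [htop, chromaticNumber_top, Fintype.card_fin] at hχ
      have : n = k := Nat.cast_injective hχ
      omega
    · subst hn
      exact no_graph_on_2k2 hk G hreg hχ

/-- For every `k ≥ 4`, there is no `(2k−4)`-regular simple graph with chromatic
number `k` on `2k−2` vertices; hence every `(2k−4|k)`-graph has at least `2k−1`
vertices, and the complement of `C_{2k−1}`, being such a graph on `2k−1` vertices,
is extremal. -/
theorem compl_cycleGraph_odd_extremal (k : ℕ) (hk : 4 ≤ k) :
    (∀ G : SimpleGraph (Fin (2 * k - 2)),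
      ¬ ((∀ v, (G.neighborSet v).ncard = 2 * k - 4) ∧ G.chromaticNumber = k)) ∧
    (∀ (n : ℕ) (G : SimpleGraph (Fin n)),
      (∀ v, (G.neighborSet v).ncard = 2 * k - 4) → G.chromaticNumber = k →
        2 * k - 1 ≤ n) ∧
    (SimpleGraph.cycleGraph (2 * k - 1))ᶜ.IsRegularOfDegree (2 * k - 4) ∧
    (SimpleGraph.cycleGraph (2 * k - 1))ᶜ.chromaticNumber = k := by
  obtain ⟨m, hm⟩ : ∃ m, 2 * k - 1 = m + 3 := ⟨2 * k - 4, by omega⟩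
  refine ⟨fun G ⟨h1, h2⟩ => no_graph_on_2k2 hk G h1 h2,
    fun n G h1 h2 => min_order hk n G h1 h2, ?_, ?_⟩
  · rw [hm]
    have hreg : (cycleGraph (m+3)).IsRegularOfDegree 2 := fun v =>
      cycleGraph_degree_three_le
    have := hreg.compl
    rwa [Fintype.card_fin, show m + 3 - 1 - 2 = 2 * k - 4 by omega] at this
  · rw [hm]
    exact compl_cycle_chrom (by omega) hk
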